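/- There exists a sequence of functions g_n, each holomorphic in a neighborhood of the closed unit disk, bounded by 1 in modulus on the open disk, with g_n(1) = 0 for all n, and g_n → 1 uniformly on compact subsets of the open disk. -/

import Mathlib

noncomputable def aa (n : ℕ) : ℝ := 1 + 1/(n+1)

lemma aa_gt_one (n : ℕ) : 1 < aa n := by
  have : (0:ℝ) < 1/(n+1) := by positivity
  simp [aa]; positivity

lemma denom_ne (n : ℕ) {z : ℂ} (hz : ‖z‖ ≤ 1) : ((aa n : ℂ) - z) ≠ 0 := by
  intro h
  have hz1 : z = (aa n : ℂ) := by linear_combination -h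
  rw [hz1] at hz
  rw [Complex.norm_real, Real.norm_eq_abs] at hz
  have := aa_gt_one n
  rw [abs_of_pos (by linarith)] at hz
  linarith

lemma num_le_denom (n : ℕ) {z : ℂ} (hz : ‖z‖ ≤ 1) :
    ‖1 - z‖ ≤ ‖(aa n : ℂ) - z‖ := by
  have hre : z.re ≤ 1 := le_trans (Complex.re_le_norm z) hz
  have ha := aa_gt_one n
  rw [Complex.norm_def, Complex.norm_def]
  apply Real.sqrt_le_sqrt
  simp [Complex.normSq_apply]
  nlinarith [ha, hre]

noncomputable def gg (n : ℕ) (z : ℂ) : ℂ := (1 - z) / ((aa n : ℂ) - z)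

/-- There is a sequence of functions `g_n`, each holomorphic on a neighborhood of the
closed unit disk, bounded by `1` in modulus on the open disk, with `g_n(1) = 0`, and
`g_n → 1` uniformly on compact subsets of the open disk. -/
theorem exists_peaking_sequence :
    ∃ g : ℕ → ℂ → ℂ,
      (∀ n : ℕ, ∃ U : Set ℂ, IsOpen U ∧ Metric.closedBall (0 : ℂ) 1 ⊆ U ∧
          DifferentiableOn ℂ (g n) U) ∧
      (∀ n : ℕ, ∀ z ∈ Metric.ball (0 : ℂ) 1, ‖g n z‖ ≤ 1) ∧
      (∀ n : ℕ, g n 1 = 0) ∧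
      (∀ Kc : Set ℂ, Kc ⊆ Metric.ball (0 : ℂ) 1 → IsCompact Kc →
          TendstoUniformlyOn g (fun _ => 1) Filter.atTop Kc) := by
  refine ⟨gg, ?_, ?_, ?_, ?_⟩
  · intro n
    refine ⟨{z | z ≠ (aa n : ℂ)}, isOpen_ne, ?_, ?_⟩
    · intro z hz
      simp only [Metric.mem_closedBall, dist_zero_right] at hz
      simp only [Set.mem_setOf_eq]
      intro h
      exact denom_ne n (z := z) (by simpa using hz) (by rw [h]; ring)
    · apply DifferentiableOn.div
      · exact (differentiable_const _ |>.sub differentiable_id).differentiableOn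
      · exact (differentiable_const _ |>.sub differentiable_id).differentiableOn
      · intro z hz
        exact sub_ne_zero.mpr (fun h => hz h.symm)
  · intro n z hz
    simp only [Metric.mem_ball, dist_zero_right] at hz
    have hz' : ‖z‖ ≤ 1 := le_of_lt (by simpa using hz)
    rw [gg, norm_div]
    exact div_le_one_of_le₀ (num_le_denom n hz')
      (norm_nonneg _) |>.trans le_rfl
  · intro n
    simp [gg]
  · intro K hK hKc
    -- get r < 1 bounding K
    obtain ⟨r, hr1, hrK⟩ : ∃ r : ℝ, r < 1 ∧ ∀ z ∈ K, ‖z‖ ≤ r := by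
      rcases K.eq_empty_or_nonempty with h | h
      · exact ⟨0, one_pos, by simp [h]⟩
      · obtain ⟨z0, hz0, hmax⟩ := hKc.exists_isMaxOn h (continuous_norm.continuousOn)
        have : ‖z0‖ < 1 := by
          have := hK hz0; simpa [Metric.mem_ball, dist_zero_right] using this
        exact ⟨‖z0‖, this, fun z hz => hmax hz⟩
    rw [Metric.tendstoUniformlyOn_iff]
    intro δ hδ
    have hr0 : 0 < 1 - r := by linarith
    have hpos0 : (0:ℝ) < δ * (1 - r) := by positivity
    have hev : ∀ᶠ n : ℕ in Filter.atTop, (1:ℝ)/(n+1) < δ * (1 - r) := by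
      obtain ⟨N, hN⟩ := exists_nat_gt ((1:ℝ)/(δ * (1-r)))
      filter_upwards [Filter.eventually_ge_atTop N] with n hn
      have hNn : ((N:ℝ)) ≤ n := by exact_mod_cast hn
      have h1 : (1:ℝ)/(δ * (1-r)) < (n:ℝ) + 1 := by linarith
      have h2 : (1:ℝ) < ((n:ℝ)+1) * (δ * (1-r)) := (div_lt_iff₀ hpos0).mp h1
      rw [div_lt_iff₀ (by positivity : (0:ℝ) < (n:ℝ)+1)]
      linarith
    filter_upwards [hev] with n hn z hz
    have hzr : ‖z‖ ≤ r := hrK z hz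
    have hz1 : ‖z‖ ≤ 1 := le_trans hzr (le_of_lt hr1)
    have hd := denom_ne n hz1
    have key : (1:ℂ) - gg n z = ((aa n : ℂ) - 1) / ((aa n : ℂ) - z) := by
      rw [gg]
      field_simp
      ring
    have hnum : (aa n : ℂ) - 1 = ((1/(n+1) : ℝ) : ℂ) := by
      push_cast [aa]; ring
    have habs : ‖(aa n : ℂ) - z‖ ≥ 1 - r := by
      have h1 : ‖(aa n : ℂ)‖ - ‖z‖ ≤ ‖(aa n : ℂ) - z‖ := by
        simpa using norm_sub_norm_le ((aa n : ℂ)) z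
      have h2 : ‖(aa n : ℂ)‖ = aa n := by
        rw [Complex.norm_real, Real.norm_eq_abs, abs_of_pos (by linarith [aa_gt_one n])]
      have := aa_gt_one n
      linarith
    rw [Complex.dist_eq, key, hnum]
    rw [norm_div, Complex.norm_real, Real.norm_eq_abs]
    have hpos : (0:ℝ) < 1/(n+1) := by positivity
    rw [abs_of_pos hpos]
    have hdenpos : 0 < ‖(aa n : ℂ) - z‖ := by linarith
    rw [div_lt_iff₀ hdenpos]
    calc (1:ℝ)/(n+1) < δ * (1-r) := hn
      _ ≤ δ * ‖(aa n : ℂ) - z‖ := by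
          apply mul_le_mul_of_nonneg_left _ (le_of_lt hδ); linarith
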